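/- Let F be a CDF on [0,1] with density f, median θ_μ > 1/2 and skewness condition ∫₀^{1-θ_μ}(1 - F(θ_μ+t) - F(θ_μ-t))dt ≤ 0. Define the lower threshold θ̲ as the value in [0, 2θ_μ−1] (if it exists, else 0) with ∫_{θ̲}^1 -(v−θ̲)² f(v) dv = -(θ_μ−θ̲)². Then for every θ_s ∈ [0, θ̲]: ∫_{θ_s}^1 -(v−θ_s)² f(v) dv ≥ -(θ_μ−θ_s)². -/

import Mathlib

open MeasureTheory intervalIntegral Set

private lemma left_deriv_aux {g : ℝ → ℝ} (hg : Continuous g) (b θ : ℝ) :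
    HasDerivAt (fun u => ∫ v in u..b, g v) (-(g θ)) θ := by
  have h : HasDerivAt (fun u => ∫ v in b..u, g v) (g θ) θ :=
    intervalIntegral.integral_hasDerivAt_right (hg.intervalIntegrable b θ)
      (hg.stronglyMeasurableAtFilter _ _) hg.continuousAt
  simpa only [Pi.neg_def, ← intervalIntegral.integral_symm] using h.neg

/-- Lemma 1 of the paper, left tail: For a CDF `F` on `[0,1]` with
density `f`, median `θμ > 1/2` and the skewness condition, if the lower threshold
`θlb ∈ [0, 2θμ - 1]` satisfies `∫_{θlb}^1 -(v-θlb)² f(v) dv = -(θμ-θlb)²`, then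
every type `θs ∈ [0, θlb]` satisfies `∫_{θs}^1 -(v-θs)² f(v) dv ≥ -(θμ-θs)²`. -/
theorem tail_types_prefer_own
    (F f : ℝ → ℝ) (θμ θlb : ℝ)
    (hF : ∀ x, HasDerivAt F (f x) x)
    (hf : Continuous f)
    (hfpos : ∀ x ∈ Set.Icc (0:ℝ) 1, 0 < f x)
    (hF0 : F 0 = 0) (hF1 : F 1 = 1)
    (hmed : F θμ = 1/2) (hθμ : 1/2 < θμ) (hθμ1 : θμ ≤ 1)
    (hskew : (∫ t in (0:ℝ)..(1 - θμ), (1 - F (θμ + t) - F (θμ - t))) ≤ 0)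
    (hθlb : θlb ∈ Set.Icc (0:ℝ) (2*θμ - 1))
    (hroot : (∫ v in θlb..1, -(v - θlb)^2 * f v) = -(θμ - θlb)^2) :
    ∀ θs ∈ Set.Icc (0:ℝ) θlb,
      -(θμ - θs)^2 ≤ ∫ v in θs..1, -(v - θs)^2 * f v := by
  have hFc : Continuous F := by
    rw [continuous_iff_continuousAt]
    exact fun x => (hF x).continuousAt
  -- F is monotone on [0,1], hence between 0 and 1 there
  have hFmono : MonotoneOn F (Icc (0:ℝ) 1) := by
    apply (strictMonoOn_of_deriv_pos (convex_Icc 0 1) hFc.continuousOn ?_).monotoneOn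
    intro x hx
    rw [interior_Icc] at hx
    rw [(hF x).deriv]
    exact hfpos x (Ioo_subset_Icc_self hx)
  have hFnonneg : ∀ x ∈ Icc (0:ℝ) 1, 0 ≤ F x := by
    intro x hx
    calc (0:ℝ) = F 0 := hF0.symm
    _ ≤ F x := hFmono ⟨le_refl 0, zero_le_one⟩ hx hx.1
  -- auxiliary integrands
  have hc1 : Continuous (fun v : ℝ => -(v^2) * f v) := by fun_prop
  have hc2 : Continuous (fun v : ℝ => v * f v) := by fun_prop
  set A : ℝ → ℝ := fun θ => ∫ v in θ..1, -(v^2) * f v with hA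
  set B : ℝ → ℝ := fun θ => ∫ v in θ..1, v * f v with hB
  set C : ℝ → ℝ := fun θ => ∫ v in θ..1, f v with hC
  have expand : ∀ θ : ℝ, (∫ v in θ..1, -(v - θ)^2 * f v)
      = A θ + 2*θ*(B θ) - θ^2 * (C θ) := by
    intro θ
    have h1 : (∫ v in θ..1, -(v - θ)^2 * f v)
        = ∫ v in θ..1, ((-(v^2) * f v + (2*θ)*(v * f v)) - θ^2 * f v) := by
      apply intervalIntegral.integral_congr
      intro v _
      ring
    rw [h1, intervalIntegral.integral_sub (f := fun v => -(v^2) * f v + (2*θ)*(v * f v))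
          (g := fun v => θ^2 * f v)
          ((hc1.add (continuous_const.mul hc2)).intervalIntegrable _ _)
          ((continuous_const.mul hf).intervalIntegrable _ _),
        intervalIntegral.integral_add (g := fun v => (2*θ)*(v * f v)) (hc1.intervalIntegrable _ _)
          ((continuous_const.mul hc2).intervalIntegrable _ _),
        intervalIntegral.integral_const_mul, intervalIntegral.integral_const_mul]
  set G : ℝ → ℝ := fun θ => A θ + 2*θ*(B θ) - θ^2 * (C θ) + (θμ - θ)^2 with hG
  -- derivative of G
  have hGderiv : ∀ θ : ℝ, HasDerivAt G (2*(B θ - θ * C θ - (θμ - θ))) θ := by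
    intro θ
    have dA : HasDerivAt A (-(-(θ^2) * f θ)) θ := left_deriv_aux hc1 1 θ
    have dB : HasDerivAt B (-(θ * f θ)) θ := left_deriv_aux hc2 1 θ
    have dC : HasDerivAt C (-(f θ)) θ := left_deriv_aux hf 1 θ
    have d2 : HasDerivAt (fun θ => 2*θ*(B θ)) (2*(B θ) + 2*θ*(-(θ * f θ))) θ := by
      have h : HasDerivAt (fun θ => 2*θ*(B θ)) _ θ := ((hasDerivAt_id θ).const_mul 2).mul dB
      convert h using 1
      simp only [id_eq]
      ring
    have d3 : HasDerivAt (fun θ => θ^2 * (C θ)) (2*θ*(C θ) + θ^2*(-(f θ))) θ := by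
      have h : HasDerivAt (fun θ => θ^2 * (C θ)) _ θ := (hasDerivAt_pow 2 θ).mul dC
      convert h using 1
      push_cast
      ring
    have d4 : HasDerivAt (fun θ => (θμ - θ)^2) (-(2*(θμ - θ))) θ := by
      have h : HasDerivAt (fun θ => (θμ - θ)^2) _ θ := (((hasDerivAt_id θ).const_sub θμ)).pow 2
      convert h using 1
      simp only [id_eq]
      push_cast
      ring
    have h : HasDerivAt G _ θ := ((dA.add d2).sub d3).add d4
    convert h using 1
    ring
  -- the skewness condition rewritten
  have hs1 : (∫ t in (0:ℝ)..(1 - θμ), F (θμ + t)) = ∫ v in θμ..1, F v := by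
    rw [intervalIntegral.integral_comp_add_left F (θμ)]
    norm_num
  have hs2 : (∫ t in (0:ℝ)..(1 - θμ), F (θμ - t)) = ∫ v in (2*θμ - 1)..θμ, F v := by
    rw [intervalIntegral.integral_comp_sub_left F (θμ)]
    norm_num
    ring_nf
  have hskew' : 1 - θμ ≤ (∫ v in (2*θμ - 1)..θμ, F v) + ∫ v in θμ..1, F v := by
    have hca : Continuous (fun t : ℝ => F (θμ + t)) := by fun_prop
    have hcs : Continuous (fun t : ℝ => F (θμ - t)) := by fun_prop
    have hsplit : (∫ t in (0:ℝ)..(1 - θμ), (1 - F (θμ + t) - F (θμ - t)))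
        = (1 - θμ) - (∫ v in θμ..1, F v) - ∫ v in (2*θμ - 1)..θμ, F v := by
      rw [intervalIntegral.integral_sub (f := fun t => 1 - F (θμ + t)) (g := fun t => F (θμ - t))
          ((continuous_const.sub hca).intervalIntegrable _ _)
          (hcs.intervalIntegrable _ _),
        intervalIntegral.integral_sub intervalIntegrable_const
          (hca.intervalIntegrable _ _), hs1, hs2]
      simp
    rw [hsplit] at hskew
    linarith
  -- key inequality: B θ - θ C θ ≤ θμ - θ on [0, 2θμ-1]
  have hkey : ∀ θ ∈ Icc (0:ℝ) (2*θμ - 1), B θ - θ * C θ ≤ θμ - θ := by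
    intro θ hθ
    have hθ1 : θ ≤ 2*θμ - 1 := hθ.2
    have h2θ : 2*θμ - 1 ≤ θμ := by linarith
    -- B θ - θ C θ = ∫ (v-θ) f v
    have hBC : B θ - θ * C θ = ∫ v in θ..1, (v - θ) * f v := by
      rw [hB, hC, ← intervalIntegral.integral_const_mul,
        ← intervalIntegral.integral_sub (g := fun v => θ * f v) (hc2.intervalIntegrable _ _)
          ((continuous_const.mul hf).intervalIntegrable _ _)]
      apply intervalIntegral.integral_congr
      intro v _
      ring
    -- integration by parts
    have hcvf : Continuous (fun v : ℝ => (v - θ) * f v) := by fun_prop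
    have hibp : (∫ v in θ..1, (F v + (v - θ) * f v)) = (1 - θ) * F 1 - (θ - θ) * F θ := by
      apply intervalIntegral.integral_eq_sub_of_hasDerivAt (f := fun v => (v - θ) * F v)
      · intro v _
        have h : HasDerivAt (fun v => (v - θ) * F v) _ v := ((hasDerivAt_id v).sub_const θ).mul (hF v)
        refine h.congr_deriv ?_
        simp only [id_eq]
        ring
      · exact (hFc.add hcvf).intervalIntegrable _ _
    rw [intervalIntegral.integral_add (hFc.intervalIntegrable _ _)
        (hcvf.intervalIntegrable _ _)] at hibp
    have hvf : (∫ v in θ..1, (v - θ) * f v) = (1 - θ) - ∫ v in θ..1, F v := by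
      rw [hF1] at hibp
      linarith [hibp]
    -- lower bound for ∫_θ^1 F
    have hsplit2 : (∫ v in θ..1, F v)
        = (∫ v in θ..(2*θμ - 1), F v) + ((∫ v in (2*θμ - 1)..θμ, F v) + ∫ v in θμ..1, F v) := by
      rw [intervalIntegral.integral_add_adjacent_intervals (hFc.intervalIntegrable _ _)
            (hFc.intervalIntegrable _ _),
          intervalIntegral.integral_add_adjacent_intervals (hFc.intervalIntegrable _ _)
            (hFc.intervalIntegrable _ _)]
    have hnn : 0 ≤ ∫ v in θ..(2*θμ - 1), F v := by
      apply intervalIntegral.integral_nonneg hθ1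
      intro u hu
      exact hFnonneg u ⟨le_trans hθ.1 hu.1, le_trans hu.2 (by linarith)⟩
    have hlow : 1 - θμ ≤ ∫ v in θ..1, F v := by
      rw [hsplit2]
      linarith
    rw [hBC, hvf]
    linarith
  -- G is antitone on [0, 2θμ - 1]
  have hGanti : AntitoneOn G (Icc (0:ℝ) (2*θμ - 1)) := by
    apply antitoneOn_of_deriv_nonpos (convex_Icc _ _)
    · exact fun x _ => ((hGderiv x).continuousAt).continuousWithinAt
    · exact fun x _ => (hGderiv x).differentiableAt.differentiableWithinAt
    · intro x hx
      rw [interior_Icc] at hx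
      rw [(hGderiv x).deriv]
      have h := hkey x (Ioo_subset_Icc_self hx)
      linarith
  -- conclusion
  intro θs hθs
  have hθsmem : θs ∈ Icc (0:ℝ) (2*θμ - 1) := ⟨hθs.1, le_trans hθs.2 hθlb.2⟩
  have hmono := hGanti hθsmem hθlb hθs.2
  have hGlb : G θlb = 0 := by
    have := expand θlb
    rw [hG]
    simp only
    rw [← this, hroot]
    ring
  have hGs : G θs = (∫ v in θs..1, -(v - θs)^2 * f v) + (θμ - θs)^2 := by
    rw [hG]
    simp only
    rw [← expand θs]
  rw [hGlb] at hmono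
  rw [hGs] at hmono
  linarith
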